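/- The Sierpiński word s is prefix normal with respect to the letter a: for every n ≥ 1 and every factor v of s of length n, the number of occurrences of the letter a in v is at most the number of occurrences of a in the prefix of s of length n. -/

import Mathlib

/-- The alphabet is `Bool`, with `true` playing the role of the letter `a` and
`false` the role of the letter `b`.
`sierpinskiApprox n` is the word `s_n`, defined by `s_0 = a` and
`s_{n+1} = s_n b^{3^n} s_n`; it has length `3^n` and is a prefix of `s_{n+1}`. -/
def sierpinskiApprox : ℕ → List Bool
  | 0 => [true]
  | n + 1 =>
      sierpinskiApprox n ++ List.replicate (3 ^ n) false ++ sierpinskiApprox n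

/-- The Sierpiński word `s = lim_{n → ∞} s_n`. -/
def sierpinski (i : ℕ) : Bool := (sierpinskiApprox (i + 1)).getD i false

/-- `v` is a (finite) factor of the infinite word `w`. -/
def IsFactor {A : Type*} (w : ℕ → A) (v : List A) : Prop :=
  ∃ i : ℕ, v = (List.range v.length).map (fun j => w (i + j))

/-! ### Auxiliary development

`chi i = true` iff the ternary expansion of `i` contains no digit `1`; this is
exactly the characteristic function of the Sierpiński word.  `A n` counts the
`true`s among `chi 0, …, chi (n-1)`.  The key combinatorial fact is the
subadditivity `A (x + y) ≤ A x + A y`, proved jointly with a second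
inequality `H` by strong induction on `x + y` via the base-3 self-similarity
of `chi`. -/

def chi : ℕ → Bool
  | 0 => true
  | n + 1 => if (n + 1) % 3 = 1 then false else chi ((n + 1) / 3)
decreasing_by exact Nat.div_lt_self (Nat.succ_pos n) (by norm_num)

def A : ℕ → ℕ
  | 0 => 0
  | n + 1 => A n + (if chi n then 1 else 0)

lemma chi_0 : chi 0 = true := by simp [chi]

lemma chi_eq (n : ℕ) (hn : n ≠ 0) :
    chi n = if n % 3 = 1 then false else chi (n / 3) := by
  cases n with
  | zero => exact absurd rfl hn
  | succ m => rw [chi]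

lemma chi_1 : chi 1 = false := by rw [chi_eq 1 (by omega)]; norm_num
lemma chi_2 : chi 2 = true := by rw [chi_eq 2 (by omega)]; norm_num [chi_0]
lemma chi_3 : chi 3 = false := by rw [chi_eq 3 (by omega)]; norm_num [chi_1]
lemma chi_4 : chi 4 = false := by rw [chi_eq 4 (by omega)]; norm_num

lemma chi_3m (m : ℕ) : chi (3 * m) = chi m := by
  rcases Nat.eq_zero_or_pos m with h | h
  · simp [h, chi_0]
  · rw [chi_eq (3 * m) (by omega)]
    have h1 : (3 * m) % 3 = 0 := by omega
    have h2 : (3 * m) / 3 = m := by omega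
    simp [h1, h2]

lemma chi_3m1 (m : ℕ) : chi (3 * m + 1) = false := by
  rw [chi_eq (3 * m + 1) (by omega)]
  have h1 : (3 * m + 1) % 3 = 1 := by omega
  simp [h1]

lemma chi_3m2 (m : ℕ) : chi (3 * m + 2) = chi m := by
  rw [chi_eq (3 * m + 2) (by omega)]
  have h1 : (3 * m + 2) % 3 = 2 := by omega
  have h2 : (3 * m + 2) / 3 = m := by omega
  simp [h1, h2]

lemma A_succ (n : ℕ) : A (n + 1) = A n + (if chi n then 1 else 0) := rfl

lemma A_3m0 (m : ℕ) : A (3 * m) = 2 * A m := by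
  induction m with
  | zero => simp [A]
  | succ k ih =>
    have e : 3 * (k + 1) = 3 * k + 2 + 1 := by ring
    rw [e, A_succ, show 3 * k + 2 = 3 * k + 1 + 1 from rfl, A_succ, A_succ, ih,
      chi_3m, chi_3m1, chi_3m2, A_succ]
    cases chi k <;> simp <;> ring

lemma A_3m1 (m : ℕ) : A (3 * m + 1) = A m + A (m + 1) := by
  rw [A_succ, A_3m0, chi_3m, A_succ]; ring

lemma A_3m2 (m : ℕ) : A (3 * m + 2) = A m + A (m + 1) := by
  rw [show 3 * m + 2 = 3 * m + 1 + 1 from rfl, A_succ, A_3m1, chi_3m1]; simp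

lemma A_3m3 (m : ℕ) : A (3 * m + 3) = 2 * A (m + 1) := by
  rw [show 3 * m + 3 = 3 * (m + 1) by ring, A_3m0]

lemma A_3m4 (m : ℕ) : A (3 * m + 4) = A (m + 1) + A (m + 2) := by
  rw [show 3 * m + 4 = 3 * (m + 1) + 1 by ring, A_3m1]

lemma A_3m5 (m : ℕ) : A (3 * m + 5) = A (m + 1) + A (m + 2) := by
  rw [show 3 * m + 5 = 3 * (m + 1) + 2 by ring, A_3m2]

lemma A_3m6 (m : ℕ) : A (3 * m + 6) = 2 * A (m + 2) := by
  rw [show 3 * m + 6 = 3 * (m + 2) by ring, A_3m0]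

lemma A_mono : Monotone A :=
  monotone_nat_of_le_succ fun n => by rw [A_succ]; omega

lemma A_0 : A 0 = 0 := rfl
lemma A_1 : A 1 = 1 := by rw [A_succ, chi_0, A_0]; simp
lemma A_2 : A 2 = 1 := by rw [show (2:ℕ) = 1 + 1 from rfl, A_succ, chi_1, A_1]; simp
lemma A_3 : A 3 = 2 := by rw [show (3:ℕ) = 2 + 1 from rfl, A_succ, chi_2, A_2]; simp
lemma A_4 : A 4 = 2 := by rw [show (4:ℕ) = 3 + 1 from rfl, A_succ, chi_3, A_3]; simp
lemma A_5 : A 5 = 2 := by rw [show (5:ℕ) = 4 + 1 from rfl, A_succ, chi_4, A_4]; simp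
lemma SH : ∀ N x y : ℕ, x + y = N →
    A (x + y) ≤ A x + A y ∧
    A (x + y + 1) + A (x + y + 2) ≤ A x + A (x + 1) + A y + A (y + 1) := by
  intro N
  induction N using Nat.strong_induction_on with
  | _ N ih =>
  intro x y hxy
  by_cases hN : N ≤ 3
  · have hx : x ≤ 3 := by omega
    have hy : y ≤ 3 := by omega
    interval_cases x <;> interval_cases y <;>
      first
        | omega
        | exact ⟨by norm_num [A_0, A_1, A_2, A_3, A_4, A_5],
            by norm_num [A_0, A_1, A_2, A_3, A_4, A_5]⟩
  · set x' := x / 3 with hx'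
    set y' := y / 3 with hy'
    have hS0 : A (x' + y') ≤ A x' + A y' :=
      (ih (x' + y') (by omega) x' y' rfl).1
    have hH : A (x' + y' + 1) + A (x' + y' + 2) ≤
        A x' + A (x' + 1) + A y' + A (y' + 1) :=
      (ih (x' + y') (by omega) x' y' rfl).2
    have hS1a : A (x' + y' + 1) ≤ A x' + A (y' + 1) :=
      (ih (x' + y' + 1) (by omega) x' (y' + 1) (by ring)).1
    have hS1b : A (x' + y' + 1) ≤ A (x' + 1) + A y' := by
      have h := (ih (x' + y' + 1) (by omega) (x' + 1) y' (by ring)).1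
      rwa [show x' + 1 + y' = x' + y' + 1 by ring] at h
    have hS2 : A (x' + y' + 2) ≤ A (x' + 1) + A (y' + 1) := by
      have h := (ih (x' + y' + 2) (by omega) (x' + 1) (y' + 1) (by ring)).1
      rwa [show x' + 1 + (y' + 1) = x' + y' + 2 by ring] at h
    have hM : A (x' + y' + 1) ≤ A (x' + y' + 2) := A_mono (by omega)
    have hMx : A x' ≤ A (x' + 1) := A_mono (by omega)
    have hMy : A y' ≤ A (y' + 1) := A_mono (by omega)
    have hu : x % 3 = 0 ∨ x % 3 = 1 ∨ x % 3 = 2 := by omega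
    have hv : y % 3 = 0 ∨ y % 3 = 1 ∨ y % 3 = 2 := by omega
    rcases hu with hu | hu | hu <;> rcases hv with hv | hv | hv
    ·
      have e1 : A (x) = 2 * A (x') := by
        rw [show (x : ℕ) = 3 * (x') by omega]; exact A_3m0 _
      have e2 : A (x + 1) = A (x') + A (x' + 1) := by
        rw [show (x + 1 : ℕ) = 3 * (x') + 1 by omega]; exact A_3m1 _
      have e3 : A (y) = 2 * A (y') := by
        rw [show (y : ℕ) = 3 * (y') by omega]; exact A_3m0 _
      have e4 : A (y + 1) = A (y') + A (y' + 1) := by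
        rw [show (y + 1 : ℕ) = 3 * (y') + 1 by omega]; exact A_3m1 _
      have e5 : A (x + y) = 2 * A (x' + y') := by
        rw [show (x + y : ℕ) = 3 * (x' + y') by omega]; exact A_3m0 _
      have e6 : A (x + y + 1) = A (x' + y') + A (x' + y' + 1) := by
        rw [show (x + y + 1 : ℕ) = 3 * (x' + y') + 1 by omega]; exact A_3m1 _
      have e7 : A (x + y + 2) = A (x' + y') + A (x' + y' + 1) := by
        rw [show (x + y + 2 : ℕ) = 3 * (x' + y') + 2 by omega]; exact A_3m2 _
      exact ⟨by linarith, by linarith⟩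
    ·
      have e1 : A (x) = 2 * A (x') := by
        rw [show (x : ℕ) = 3 * (x') by omega]; exact A_3m0 _
      have e2 : A (x + 1) = A (x') + A (x' + 1) := by
        rw [show (x + 1 : ℕ) = 3 * (x') + 1 by omega]; exact A_3m1 _
      have e3 : A (y) = A (y') + A (y' + 1) := by
        rw [show (y : ℕ) = 3 * (y') + 1 by omega]; exact A_3m1 _
      have e4 : A (y + 1) = A (y') + A (y' + 1) := by
        rw [show (y + 1 : ℕ) = 3 * (y') + 2 by omega]; exact A_3m2 _
      have e5 : A (x + y) = A (x' + y') + A (x' + y' + 1) := by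
        rw [show (x + y : ℕ) = 3 * (x' + y') + 1 by omega]; exact A_3m1 _
      have e6 : A (x + y + 1) = A (x' + y') + A (x' + y' + 1) := by
        rw [show (x + y + 1 : ℕ) = 3 * (x' + y') + 2 by omega]; exact A_3m2 _
      have e7 : A (x + y + 2) = 2 * A (x' + y' + 1) := by
        rw [show (x + y + 2 : ℕ) = 3 * (x' + y') + 3 by omega]; exact A_3m3 _
      exact ⟨by linarith, by linarith⟩
    ·
      have e1 : A (x) = 2 * A (x') := by
        rw [show (x : ℕ) = 3 * (x') by omega]; exact A_3m0 _
      have e2 : A (x + 1) = A (x') + A (x' + 1) := by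
        rw [show (x + 1 : ℕ) = 3 * (x') + 1 by omega]; exact A_3m1 _
      have e3 : A (y) = A (y') + A (y' + 1) := by
        rw [show (y : ℕ) = 3 * (y') + 2 by omega]; exact A_3m2 _
      have e4 : A (y + 1) = 2 * A (y' + 1) := by
        rw [show (y + 1 : ℕ) = 3 * (y') + 3 by omega]; exact A_3m3 _
      have e5 : A (x + y) = A (x' + y') + A (x' + y' + 1) := by
        rw [show (x + y : ℕ) = 3 * (x' + y') + 2 by omega]; exact A_3m2 _
      have e6 : A (x + y + 1) = 2 * A (x' + y' + 1) := by
        rw [show (x + y + 1 : ℕ) = 3 * (x' + y') + 3 by omega]; exact A_3m3 _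
      have e7 : A (x + y + 2) = A (x' + y' + 1) + A (x' + y' + 2) := by
        rw [show (x + y + 2 : ℕ) = 3 * (x' + y') + 4 by omega]; exact A_3m4 _
      exact ⟨by linarith, by linarith⟩
    ·
      have e1 : A (x) = A (x') + A (x' + 1) := by
        rw [show (x : ℕ) = 3 * (x') + 1 by omega]; exact A_3m1 _
      have e2 : A (x + 1) = A (x') + A (x' + 1) := by
        rw [show (x + 1 : ℕ) = 3 * (x') + 2 by omega]; exact A_3m2 _
      have e3 : A (y) = 2 * A (y') := by
        rw [show (y : ℕ) = 3 * (y') by omega]; exact A_3m0 _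
      have e4 : A (y + 1) = A (y') + A (y' + 1) := by
        rw [show (y + 1 : ℕ) = 3 * (y') + 1 by omega]; exact A_3m1 _
      have e5 : A (x + y) = A (x' + y') + A (x' + y' + 1) := by
        rw [show (x + y : ℕ) = 3 * (x' + y') + 1 by omega]; exact A_3m1 _
      have e6 : A (x + y + 1) = A (x' + y') + A (x' + y' + 1) := by
        rw [show (x + y + 1 : ℕ) = 3 * (x' + y') + 2 by omega]; exact A_3m2 _
      have e7 : A (x + y + 2) = 2 * A (x' + y' + 1) := by
        rw [show (x + y + 2 : ℕ) = 3 * (x' + y') + 3 by omega]; exact A_3m3 _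
      exact ⟨by linarith, by linarith⟩
    ·
      have e1 : A (x) = A (x') + A (x' + 1) := by
        rw [show (x : ℕ) = 3 * (x') + 1 by omega]; exact A_3m1 _
      have e2 : A (x + 1) = A (x') + A (x' + 1) := by
        rw [show (x + 1 : ℕ) = 3 * (x') + 2 by omega]; exact A_3m2 _
      have e3 : A (y) = A (y') + A (y' + 1) := by
        rw [show (y : ℕ) = 3 * (y') + 1 by omega]; exact A_3m1 _
      have e4 : A (y + 1) = A (y') + A (y' + 1) := by
        rw [show (y + 1 : ℕ) = 3 * (y') + 2 by omega]; exact A_3m2 _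
      have e5 : A (x + y) = A (x' + y') + A (x' + y' + 1) := by
        rw [show (x + y : ℕ) = 3 * (x' + y') + 2 by omega]; exact A_3m2 _
      have e6 : A (x + y + 1) = 2 * A (x' + y' + 1) := by
        rw [show (x + y + 1 : ℕ) = 3 * (x' + y') + 3 by omega]; exact A_3m3 _
      have e7 : A (x + y + 2) = A (x' + y' + 1) + A (x' + y' + 2) := by
        rw [show (x + y + 2 : ℕ) = 3 * (x' + y') + 4 by omega]; exact A_3m4 _
      exact ⟨by linarith, by linarith⟩
    ·
      have e1 : A (x) = A (x') + A (x' + 1) := by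
        rw [show (x : ℕ) = 3 * (x') + 1 by omega]; exact A_3m1 _
      have e2 : A (x + 1) = A (x') + A (x' + 1) := by
        rw [show (x + 1 : ℕ) = 3 * (x') + 2 by omega]; exact A_3m2 _
      have e3 : A (y) = A (y') + A (y' + 1) := by
        rw [show (y : ℕ) = 3 * (y') + 2 by omega]; exact A_3m2 _
      have e4 : A (y + 1) = 2 * A (y' + 1) := by
        rw [show (y + 1 : ℕ) = 3 * (y') + 3 by omega]; exact A_3m3 _
      have e5 : A (x + y) = 2 * A (x' + y' + 1) := by
        rw [show (x + y : ℕ) = 3 * (x' + y') + 3 by omega]; exact A_3m3 _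
      have e6 : A (x + y + 1) = A (x' + y' + 1) + A (x' + y' + 2) := by
        rw [show (x + y + 1 : ℕ) = 3 * (x' + y') + 4 by omega]; exact A_3m4 _
      have e7 : A (x + y + 2) = A (x' + y' + 1) + A (x' + y' + 2) := by
        rw [show (x + y + 2 : ℕ) = 3 * (x' + y') + 5 by omega]; exact A_3m5 _
      exact ⟨by linarith, by linarith⟩
    ·
      have e1 : A (x) = A (x') + A (x' + 1) := by
        rw [show (x : ℕ) = 3 * (x') + 2 by omega]; exact A_3m2 _
      have e2 : A (x + 1) = 2 * A (x' + 1) := by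
        rw [show (x + 1 : ℕ) = 3 * (x') + 3 by omega]; exact A_3m3 _
      have e3 : A (y) = 2 * A (y') := by
        rw [show (y : ℕ) = 3 * (y') by omega]; exact A_3m0 _
      have e4 : A (y + 1) = A (y') + A (y' + 1) := by
        rw [show (y + 1 : ℕ) = 3 * (y') + 1 by omega]; exact A_3m1 _
      have e5 : A (x + y) = A (x' + y') + A (x' + y' + 1) := by
        rw [show (x + y : ℕ) = 3 * (x' + y') + 2 by omega]; exact A_3m2 _
      have e6 : A (x + y + 1) = 2 * A (x' + y' + 1) := by
        rw [show (x + y + 1 : ℕ) = 3 * (x' + y') + 3 by omega]; exact A_3m3 _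
      have e7 : A (x + y + 2) = A (x' + y' + 1) + A (x' + y' + 2) := by
        rw [show (x + y + 2 : ℕ) = 3 * (x' + y') + 4 by omega]; exact A_3m4 _
      exact ⟨by linarith, by linarith⟩
    ·
      have e1 : A (x) = A (x') + A (x' + 1) := by
        rw [show (x : ℕ) = 3 * (x') + 2 by omega]; exact A_3m2 _
      have e2 : A (x + 1) = 2 * A (x' + 1) := by
        rw [show (x + 1 : ℕ) = 3 * (x') + 3 by omega]; exact A_3m3 _
      have e3 : A (y) = A (y') + A (y' + 1) := by
        rw [show (y : ℕ) = 3 * (y') + 1 by omega]; exact A_3m1 _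
      have e4 : A (y + 1) = A (y') + A (y' + 1) := by
        rw [show (y + 1 : ℕ) = 3 * (y') + 2 by omega]; exact A_3m2 _
      have e5 : A (x + y) = 2 * A (x' + y' + 1) := by
        rw [show (x + y : ℕ) = 3 * (x' + y') + 3 by omega]; exact A_3m3 _
      have e6 : A (x + y + 1) = A (x' + y' + 1) + A (x' + y' + 2) := by
        rw [show (x + y + 1 : ℕ) = 3 * (x' + y') + 4 by omega]; exact A_3m4 _
      have e7 : A (x + y + 2) = A (x' + y' + 1) + A (x' + y' + 2) := by
        rw [show (x + y + 2 : ℕ) = 3 * (x' + y') + 5 by omega]; exact A_3m5 _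
      exact ⟨by linarith, by linarith⟩
    ·
      have e1 : A (x) = A (x') + A (x' + 1) := by
        rw [show (x : ℕ) = 3 * (x') + 2 by omega]; exact A_3m2 _
      have e2 : A (x + 1) = 2 * A (x' + 1) := by
        rw [show (x + 1 : ℕ) = 3 * (x') + 3 by omega]; exact A_3m3 _
      have e3 : A (y) = A (y') + A (y' + 1) := by
        rw [show (y : ℕ) = 3 * (y') + 2 by omega]; exact A_3m2 _
      have e4 : A (y + 1) = 2 * A (y' + 1) := by
        rw [show (y + 1 : ℕ) = 3 * (y') + 3 by omega]; exact A_3m3 _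
      have e5 : A (x + y) = A (x' + y' + 1) + A (x' + y' + 2) := by
        rw [show (x + y : ℕ) = 3 * (x' + y') + 4 by omega]; exact A_3m4 _
      have e6 : A (x + y + 1) = A (x' + y' + 1) + A (x' + y' + 2) := by
        rw [show (x + y + 1 : ℕ) = 3 * (x' + y') + 5 by omega]; exact A_3m5 _
      have e7 : A (x + y + 2) = 2 * A (x' + y' + 2) := by
        rw [show (x + y + 2 : ℕ) = 3 * (x' + y') + 6 by omega]; exact A_3m6 _
      exact ⟨by linarith, by linarith⟩

lemma A_subadd (x y : ℕ) : A (x + y) ≤ A x + A y := (SH (x + y) x y rfl).1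

lemma approx_length (n : ℕ) : (sierpinskiApprox n).length = 3 ^ n := by
  induction n with
  | zero => rfl
  | succ k ih => simp [sierpinskiApprox, ih, pow_succ]; ring

lemma chi_mid : ∀ n i, 3 ^ n ≤ i → i < 2 * 3 ^ n → chi i = false := by
  intro n
  induction n with
  | zero =>
    intro i h1 h2
    norm_num at h1 h2
    have : i = 1 := by omega
    rw [this]; exact chi_1
  | succ k ih =>
    intro i h1 h2
    have hp : (0:ℕ) < 3 ^ k := Nat.pow_pos (by norm_num)
    have hps : (3:ℕ) ^ (k + 1) = 3 * 3 ^ k := by rw [pow_succ]; ring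
    rw [hps] at h1 h2
    have hi0 : i ≠ 0 := by omega
    rw [chi_eq i hi0]
    by_cases h : i % 3 = 1
    · simp [h]
    · rw [if_neg h]
      exact ih (i / 3) (by omega) (by omega)

lemma chi_high : ∀ n i, i < 3 ^ n → chi (2 * 3 ^ n + i) = chi i := by
  intro n
  induction n with
  | zero =>
    intro i hi
    norm_num at hi
    rw [hi]; norm_num [chi_2, chi_0]
  | succ k ih =>
    intro i hi
    have hp : (0:ℕ) < 3 ^ k := Nat.pow_pos (by norm_num)
    have hps : (3:ℕ) ^ (k + 1) = 3 * 3 ^ k := by rw [pow_succ]; ring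
    rw [hps] at hi ⊢
    by_cases h : i % 3 = 1
    · rw [chi_eq (2 * (3 * 3 ^ k) + i) (by omega), if_pos (by omega),
        chi_eq i (by omega), if_pos h]
    · rw [chi_eq (2 * (3 * 3 ^ k) + i) (by omega), if_neg (by omega)]
      have hdiv : (2 * (3 * 3 ^ k) + i) / 3 = 2 * 3 ^ k + i / 3 := by omega
      rw [hdiv, ih (i / 3) (by omega)]
      by_cases h0 : i = 0
      · rw [h0]
      · rw [chi_eq i h0, if_neg h]

lemma approx_getD : ∀ n i, i < 3 ^ n → (sierpinskiApprox n).getD i false = chi i := by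
  intro n
  induction n with
  | zero =>
    intro i hi
    norm_num at hi
    rw [hi]
    simp [sierpinskiApprox, chi_0, List.getD]
  | succ k ih =>
    intro i hi
    have hp : (0:ℕ) < 3 ^ k := Nat.pow_pos (by norm_num)
    have hps : (3:ℕ) ^ (k + 1) = 3 * 3 ^ k := by rw [pow_succ]; ring
    rw [hps] at hi
    have hl : (sierpinskiApprox k).length = 3 ^ k := approx_length k
    have hl2 : (sierpinskiApprox k ++ List.replicate (3 ^ k) false).length = 2 * 3 ^ k := by
      simp [hl]; ring
    rw [show sierpinskiApprox (k + 1) =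
      sierpinskiApprox k ++ List.replicate (3 ^ k) false ++ sierpinskiApprox k
      from rfl]
    by_cases h1 : i < 3 ^ k
    · rw [List.getD_append _ _ _ _ (by omega), List.getD_append _ _ _ _ (by omega)]
      exact ih i h1
    · by_cases h2 : i < 2 * 3 ^ k
      · rw [List.getD_append _ _ _ _ (by omega),
          List.getD_append_right _ _ _ _ (by omega)]
        rw [chi_mid k i (by omega) h2]
        simp [List.getD]
      · rw [List.getD_append_right _ _ _ _ (by omega), hl2]
        rw [ih (i - 2 * 3 ^ k) (by omega)]
        have := chi_high k (i - 2 * 3 ^ k) (by omega)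
        rw [show 2 * 3 ^ k + (i - 2 * 3 ^ k) = i by omega] at this
        rw [this]

lemma sierpinski_eq_chi (i : ℕ) : sierpinski i = chi i := by
  apply approx_getD
  calc i < 3 ^ i := Nat.lt_pow_self (by norm_num)
    _ ≤ 3 ^ (i + 1) := Nat.pow_le_pow_right (by norm_num) (Nat.le_succ i)

lemma count_window (i : ℕ) :
    ∀ n, ((List.range n).map (fun j => sierpinski (i + j))).count true + A i
      = A (i + n) := by
  intro n
  induction n with
  | zero => simp
  | succ k ih =>
    rw [List.range_succ, List.map_append, List.count_append,
      show i + (k + 1) = (i + k) + 1 from rfl, A_succ]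
    have hs : sierpinski (i + k) = chi (i + k) := sierpinski_eq_chi _
    simp only [List.map_cons, List.map_nil, hs]
    cases chi (i + k) <;> simp <;> omega

/-- The Sierpiński word is prefix normal with respect to the letter `a`:
every factor of length `n` contains at most as many `a`'s as the prefix of
length `n`. -/
theorem sierpinski_prefix_normal :
    ∀ n : ℕ, 1 ≤ n → ∀ v : List Bool, IsFactor sierpinski v → v.length = n →
      v.count true ≤ ((List.range n).map (fun j => sierpinski j)).count true := by
  intro n _ v hf hlen
  subst hlen
  obtain ⟨i, hv⟩ := hf
  have h1 := count_window i v.length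
  have h2 := count_window 0 v.length
  simp only [Nat.zero_add] at h2
  have hsub : A (i + v.length) ≤ A i + A v.length := A_subadd i v.length
  have hc : v.count true
      = ((List.range v.length).map (fun j => sierpinski (i + j))).count true := by
    conv_lhs => rw [hv]
  rw [hc]
  have hA0 : A 0 = 0 := rfl
  omega
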